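/- With σ and ε as above, the three cones σ, ε(σ), ε²(σ) pairwise intersect in {0}. Consequently, the collection Σ consisting of σ, ε(σ), ε²(σ) together with all of their faces is a fan in ℚ³, and Σ is stable under ε (note that ε³ is the identity). -/

import Mathlib

open Pointwise

/-- The cone generated by a finite family of vectors: all nonnegative
rational linear combinations of the `g i`. -/
def coneGen {V : Type*} [AddCommGroup V] [Module ℚ V] {n : ℕ} (g : Fin n → V) : Set V :=
  {x | ∃ c : Fin n → ℚ, (∀ i, 0 ≤ c i) ∧ x = ∑ i, c i • g i}

/-- A set is a cone if it is the cone generated by some finite family of vectors. -/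
def IsCone {V : Type*} [AddCommGroup V] [Module ℚ V] (C : Set V) : Prop :=
  ∃ (n : ℕ) (g : Fin n → V), C = coneGen g

/-- `F` is a face of the cone `C` if `F = C ∩ l⁻¹(0)` for some linear form `l`
nonnegative on `C`. -/
def IsFaceOf {V : Type*} [AddCommGroup V] [Module ℚ V] (F C : Set V) : Prop :=
  ∃ l : V →ₗ[ℚ] ℚ, (∀ x ∈ C, 0 ≤ l x) ∧ F = C ∩ {x | l x = 0}

/-- A fan: a finite collection of strictly convex cones, closed under taking faces,
such that the intersection of any two of its cones is a face of each. -/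
def IsFan {V : Type*} [AddCommGroup V] [Module ℚ V] (S : Set (Set V)) : Prop :=
  S.Finite ∧
  (∀ C ∈ S, IsCone C ∧ C ∩ (-C) = ({0} : Set V)) ∧
  (∀ C ∈ S, ∀ F : Set V, IsFaceOf F C → F ∈ S) ∧
  (∀ C ∈ S, ∀ C' ∈ S, IsFaceOf (C ∩ C') C ∧ IsFaceOf (C ∩ C') C')

/-- A cone of the collection `S` is maximal if it is not strictly contained in
another cone of `S`. -/
def IsMaximalIn {V : Type*} [AddCommGroup V] [Module ℚ V] (S : Set (Set V)) (C : Set V) : Prop :=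
  C ∈ S ∧ ∀ C' ∈ S, C ⊆ C' → C' = C

/-- A fan is quasi-projective if there is a family of linear forms indexed by its
maximal cones which agree on pairwise intersections and satisfy the strict
inequality condition. -/
def IsQuasiProjectiveFan {V : Type*} [AddCommGroup V] [Module ℚ V] (S : Set (Set V)) : Prop :=
  ∃ l : Set V → (V →ₗ[ℚ] ℚ),
    (∀ C, IsMaximalIn S C → ∀ C', IsMaximalIn S C' → ∀ x ∈ C ∩ C', l C x = l C' x) ∧
    (∀ C, IsMaximalIn S C → ∀ C', IsMaximalIn S C' → C ≠ C' →
      ∀ x ∈ C, x ∉ C' → l C' x < l C x)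

/-- The generators `5u+v−5w`, `−5u−5v+14w`, `4u−v` of the cone `σ`. -/
def genS : Fin 3 → (Fin 3 → ℚ) := ![![5, 1, -5], ![-5, -5, 14], ![4, -1, 0]]

/-- The cone `σ = Cone(5u+v−5w, −5u−5v+14w, 4u−v)` in `ℚ³`. -/
def coneSigma : Set (Fin 3 → ℚ) := coneGen genS

/-- The matrix of `ε` in the standard basis `(u, v, w)`:
`ε(u) = v`, `ε(v) = −u−v`, `ε(w) = w`. -/
def epsMat : Matrix (Fin 3) (Fin 3) ℚ := ![![0, -1, 0], ![1, -1, 0], ![0, 0, 1]]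

/-- The linear automorphism `ε : ℚ³ → ℚ³`. -/
def eps : (Fin 3 → ℚ) →ₗ[ℚ] (Fin 3 → ℚ) := Matrix.toLin' epsMat

/-- The collection `Σ` consisting of `σ`, `ε(σ)`, `ε²(σ)` together with all of
their faces. -/
def fanSigma : Set (Set (Fin 3 → ℚ)) :=
  {coneSigma, ⇑eps '' coneSigma, ⇑eps '' (⇑eps '' coneSigma)} ∪
    {C | IsFaceOf C coneSigma ∨ IsFaceOf C (⇑eps '' coneSigma) ∨
      IsFaceOf C (⇑eps '' (⇑eps '' coneSigma))}

section FanAuxSec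
variable {V : Type*} [AddCommGroup V] [Module ℚ V] {n : ℕ}

def subCone (g : Fin n → V) (I : Set (Fin n)) : Set V :=
  {x | ∃ c : Fin n → ℚ, (∀ i, 0 ≤ c i) ∧ (∀ i, i ∉ I → c i = 0) ∧ x = ∑ i, c i • g i}

lemma subCone_univ (g : Fin n → V) : subCone g Set.univ = coneGen g := by
  ext x
  exact ⟨fun ⟨c, hc, _, hx⟩ => ⟨c, hc, hx⟩,
    fun ⟨c, hc, hx⟩ => ⟨c, hc, fun i hi => absurd trivial hi, hx⟩⟩

lemma zero_mem_subCone (g : Fin n → V) (I : Set (Fin n)) : (0 : V) ∈ subCone g I :=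
  ⟨0, fun _ => le_refl 0, fun _ _ => rfl, by simp⟩

lemma subCone_mono (g : Fin n → V) {I J : Set (Fin n)} (h : I ⊆ J) :
    subCone g I ⊆ subCone g J := by
  rintro x ⟨c, hc, hs, rfl⟩
  exact ⟨c, hc, fun i hi => hs i (fun hI => hi (h hI)), rfl⟩

lemma subCone_subset_coneGen (g : Fin n → V) (I : Set (Fin n)) :
    subCone g I ⊆ coneGen g := by
  rintro x ⟨c, hc, _, rfl⟩; exact ⟨c, hc, rfl⟩

lemma gen_mem_subCone {g : Fin n → V} {I : Set (Fin n)} {i : Fin n} (hi : i ∈ I) :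
    g i ∈ subCone g I := by
  classical
  refine ⟨fun j => if j = i then 1 else 0, ?_, ?_, ?_⟩
  · intro j; dsimp only; split <;> norm_num
  · intro j hj; simp only [ite_eq_right_iff]; rintro rfl; exact absurd hi hj
  · simp [ite_smul]

lemma subCone_empty (g : Fin n → V) : subCone g (∅ : Set (Fin n)) = {0} := by
  ext x
  constructor
  · rintro ⟨c, _, hs, rfl⟩
    have : ∀ i, c i = 0 := fun i => hs i (by simp)
    simp [this]
  · rintro rfl; exact zero_mem_subCone g ∅

lemma subCone_isCone (g : Fin n → V) (I : Set (Fin n)) :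
    IsCone (subCone g I) := by
  classical
  refine ⟨n, fun i => if i ∈ I then g i else 0, ?_⟩
  ext x
  constructor
  · rintro ⟨c, hc, hs, rfl⟩
    refine ⟨c, hc, Finset.sum_congr rfl fun i _ => ?_⟩
    by_cases h : i ∈ I <;> simp [h, hs i]
  · rintro ⟨c, hc, rfl⟩
    refine ⟨fun i => if i ∈ I then c i else 0, fun i => ?_, fun i hi => by simp [hi], ?_⟩
    · dsimp only; split
      · exact hc i
      · exact le_refl 0
    · refine Finset.sum_congr rfl fun i _ => ?_
      by_cases h : i ∈ I <;> simp [h]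

lemma image_subCone {W : Type*} [AddCommGroup W] [Module ℚ W]
    (f : V →ₗ[ℚ] W) (g : Fin n → V) (I : Set (Fin n)) :
    f '' subCone g I = subCone (⇑f ∘ g) I := by
  ext x
  constructor
  · rintro ⟨y, ⟨c, hc, hs, rfl⟩, rfl⟩
    exact ⟨c, hc, hs, by simp [map_sum, Function.comp]⟩
  · rintro ⟨c, hc, hs, rfl⟩
    exact ⟨∑ i, c i • g i, ⟨c, hc, hs, rfl⟩, by simp [map_sum, Function.comp]⟩

lemma lform_apply_subCone {g : Fin n → V} {l : V →ₗ[ℚ] ℚ}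
    {c : Fin n → ℚ} : l (∑ i, c i • g i) = ∑ i, c i * l (g i) := by
  simp [map_sum]

lemma subCone_inter_ker {g : Fin n → V} {I : Set (Fin n)} {l : V →ₗ[ℚ] ℚ}
    (hl : ∀ x ∈ subCone g I, 0 ≤ l x) :
    subCone g I ∩ {x | l x = 0} = subCone g {i | i ∈ I ∧ l (g i) = 0} := by
  have hgen : ∀ i ∈ I, 0 ≤ l (g i) := fun i hi => hl _ (gen_mem_subCone hi)
  ext x
  constructor
  · rintro ⟨⟨c, hc, hs, rfl⟩, hx0⟩
    have hterm : ∀ i ∈ Finset.univ, 0 ≤ c i * l (g i) := by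
      intro i _
      by_cases h : i ∈ I
      · exact mul_nonneg (hc i) (hgen i h)
      · simp [hs i h]
    have hsum : ∑ i, c i * l (g i) = 0 := by
      rw [← lform_apply_subCone]; exact hx0
    have hzero := (Finset.sum_eq_zero_iff_of_nonneg hterm).1 hsum
    refine ⟨c, hc, fun i hi => ?_, rfl⟩
    by_cases h : i ∈ I
    · have hne : l (g i) ≠ 0 := fun h0 => hi ⟨h, h0⟩
      have := hzero i (Finset.mem_univ i)
      rcases mul_eq_zero.1 this with h1 | h1
      · exact h1
      · exact absurd h1 hne
    · exact hs i h
  · rintro ⟨c, hc, hs, rfl⟩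
    refine ⟨⟨c, hc, fun i hi => hs i (fun ⟨h1, _⟩ => hi h1), rfl⟩, ?_⟩
    show l _ = 0
    rw [lform_apply_subCone]
    refine Finset.sum_eq_zero fun i _ => ?_
    by_cases h : i ∈ I ∧ l (g i) = 0
    · simp [h.2]
    · simp [hs i h]



section Dual
variable {g : Fin n → V} {d : Fin n → (V →ₗ[ℚ] ℚ)}

lemma coeff_eq (hd : ∀ i j, d i (g j) = if i = j then 1 else 0)
    (c : Fin n → ℚ) (i : Fin n) : d i (∑ j, c j • g j) = c i := by
  classical
  rw [map_sum]
  have : ∀ j, d i (c j • g j) = if j = i then c j else 0 := by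
    intro j
    rw [map_smul, smul_eq_mul, hd i j]
    by_cases h : i = j <;> simp [h, eq_comm]
  simp only [this, Finset.sum_ite_eq', Finset.mem_univ, if_true]

lemma subCone_inter_subCone (hd : ∀ i j, d i (g j) = if i = j then 1 else 0)
    (I J : Set (Fin n)) : subCone g I ∩ subCone g J = subCone g (I ∩ J) := by
  ext x
  constructor
  · rintro ⟨⟨a, ha, hsa, rfl⟩, ⟨b, hb, hsb, hx⟩⟩
    refine ⟨a, ha, fun i hi => ?_, rfl⟩
    rcases (by tauto : i ∉ I ∨ i ∉ J) with h | h
    · exact hsa i h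
    · have h1 : a i = d i (∑ j, a j • g j) := (coeff_eq hd a i).symm
      have h2 : d i (∑ j, b j • g j) = b i := coeff_eq hd b i
      rw [h1, hx, h2]
      exact hsb i h
  · intro hx
    exact ⟨subCone_mono g Set.inter_subset_left hx, subCone_mono g Set.inter_subset_right hx⟩

lemma subCone_neg_inter (hd : ∀ i j, d i (g j) = if i = j then 1 else 0)
    (I : Set (Fin n)) : subCone g I ∩ (-(subCone g I)) = ({0} : Set V) := by
  ext x
  constructor
  · rintro ⟨⟨a, ha, hsa, rfl⟩, hneg⟩
    rw [Set.mem_neg] at hneg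
    obtain ⟨b, hb, hsb, hx⟩ := hneg
    have hzero : ∀ i, a i = 0 := by
      intro i
      have h1 : d i (∑ j, a j • g j) = a i := coeff_eq hd a i
      have h2 : d i (∑ j, b j • g j) = b i := coeff_eq hd b i
      have h3 := h2
      rw [← hx, map_neg, h1] at h3
      have := hb i
      rw [← h3] at this
      linarith [ha i]
    simp [hzero]
  · rintro rfl
    exact ⟨zero_mem_subCone g I, by rw [Set.mem_neg, neg_zero]; exact zero_mem_subCone g I⟩

lemma subCone_isFaceOf_subCone (hd : ∀ i j, d i (g j) = if i = j then 1 else 0)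
    {I J : Set (Fin n)} (hJI : J ⊆ I) :
    IsFaceOf (subCone g J) (subCone g I) := by
  classical
  set l : V →ₗ[ℚ] ℚ := ∑ i, (if i ∈ J then (0:ℚ) else 1) • d i with hl
  have hlg : ∀ j, l (g j) = if j ∈ J then 0 else 1 := by
    intro j
    rw [hl]
    simp only [LinearMap.sum_apply, LinearMap.smul_apply, smul_eq_mul, hd]
    have : ∀ i, ((if i ∈ J then (0:ℚ) else 1) * (if i = j then 1 else 0))
        = if i = j then (if j ∈ J then (0:ℚ) else 1) else 0 := by
      intro i
      by_cases h : i = j <;> subst_eqs <;> split_ifs <;> ring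
    simp only [this, Finset.sum_ite_eq', Finset.mem_univ, if_true]
  have hnn : ∀ x ∈ subCone g I, 0 ≤ l x := by
    rintro x ⟨c, hc, hs, rfl⟩
    rw [lform_apply_subCone]
    refine Finset.sum_nonneg fun i _ => mul_nonneg (hc i) ?_
    rw [hlg i]; split <;> norm_num
  refine ⟨l, hnn, ?_⟩
  have hset : {i : Fin n | i ∈ I ∧ l (g i) = 0} = J := by
    ext i
    simp only [Set.mem_setOf_eq, hlg i]
    constructor
    · rintro ⟨hiI, h⟩
      by_contra hiJ
      simp [hiJ] at h
    · exact fun hi => ⟨hJI hi, by simp [hi]⟩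
  rw [subCone_inter_ker hnn, hset]
lemma zero_mem_coneGen (g : Fin n → V) : (0 : V) ∈ coneGen g :=
  ⟨0, fun _ => le_refl 0, by simp⟩

lemma coneGen_inter_of_sep {g h : Fin n → V} {l : V →ₗ[ℚ] ℚ}
    (hg : ∀ i, 0 < l (g i)) (hh : ∀ i, l (h i) < 0) :
    coneGen g ∩ coneGen h = ({0} : Set V) := by
  ext x
  constructor
  · rintro ⟨⟨a, ha, rfl⟩, ⟨b, hb, hx⟩⟩
    have h1 : l (∑ i, a i • g i) = ∑ i, a i * l (g i) := lform_apply_subCone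
    have h2 : l (∑ i, b i • h i) = ∑ i, b i * l (h i) := lform_apply_subCone
    have hle : l (∑ i, a i • g i) ≤ 0 := by
      rw [hx, h2]
      exact Finset.sum_nonpos fun i _ => mul_nonpos_of_nonneg_of_nonpos (hb i) (le_of_lt (hh i))
    have hterm : ∀ i ∈ Finset.univ, 0 ≤ a i * l (g i) :=
      fun i _ => mul_nonneg (ha i) (le_of_lt (hg i))
    have hsum : ∑ i, a i * l (g i) = 0 := by
      have := Finset.sum_nonneg hterm
      rw [← h1] at this ⊢
      linarith
    have hzero := (Finset.sum_eq_zero_iff_of_nonneg hterm).1 hsum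
    have haz : ∀ i, a i = 0 := by
      intro i
      have := hzero i (Finset.mem_univ i)
      rcases mul_eq_zero.1 this with h' | h'
      · exact h'
      · exact absurd h' (ne_of_gt (hg i))
    simp [haz]
  · rintro rfl
    exact ⟨zero_mem_coneGen g, zero_mem_coneGen h⟩
end Dual

end FanAuxSec

section Concrete

def lf (v : Fin 3 → ℚ) : (Fin 3 → ℚ) →ₗ[ℚ] ℚ where
  toFun x := v 0 * x 0 + v 1 * x 1 + v 2 * x 2
  map_add' x y := by simp only [Pi.add_apply]; ring
  map_smul' c x := by simp only [Pi.smul_apply, smul_eq_mul, RingHom.id_apply]; ring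

@[simp] lemma lf_apply (v x : Fin 3 → ℚ) :
    lf v x = v 0 * x 0 + v 1 * x 1 + v 2 * x 2 := rfl

lemma eps_apply (x : Fin 3 → ℚ) : eps x = ![-(x 1), x 0 - x 1, x 2] := by
  rw [eps, Matrix.toLin'_apply]
  funext i
  fin_cases i <;>
    simp [eps, epsMat, Matrix.toLin'_apply, Matrix.mulVec, dotProduct,
      Fin.sum_univ_three] <;> ring

def gg1 : Fin 3 → (Fin 3 → ℚ) := ![![-1, 4, -5], ![5, 0, 14], ![1, 5, 0]]
def gg2 : Fin 3 → (Fin 3 → ℚ) := ![![-4, -5, -5], ![0, 5, 14], ![-5, -4, 0]]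

lemma eps_genS : ⇑eps ∘ genS = gg1 := by
  funext i
  fin_cases i <;>
    · rw [Function.comp_apply, eps_apply]
      funext j; fin_cases j <;> norm_num [genS, gg1, Matrix.cons_val_two]

lemma eps_gg1 : ⇑eps ∘ gg1 = gg2 := by
  funext i
  fin_cases i <;>
    · rw [Function.comp_apply, eps_apply]
      funext j; fin_cases j <;> norm_num [gg1, gg2, Matrix.cons_val_two]

lemma eps_gg2 : ⇑eps ∘ gg2 = genS := by
  funext i
  fin_cases i <;>
    · rw [Function.comp_apply, eps_apply]
      funext j; fin_cases j <;> norm_num [genS, gg2, Matrix.cons_val_two]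

def G : Fin 3 → Fin 3 → (Fin 3 → ℚ) := ![genS, gg1, gg2]

def D : Fin 3 → Fin 3 → ((Fin 3 → ℚ) →ₗ[ℚ] ℚ) :=
  ![![lf ![14, 56, 25], lf ![5, 20, 9], lf ![-11, -45, -20]],
    ![lf ![-70, 14, 25], lf ![-25, 5, 9], lf ![56, -11, -20]],
    ![lf ![56, -70, 25], lf ![20, -25, 9], lf ![-45, 56, -20]]]

lemma hD (k : Fin 3) : ∀ i j, D k i (G k j) = if i = j then 1 else 0 := by
  intro i j
  fin_cases k <;> fin_cases i <;> fin_cases j <;>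
    norm_num [D, G, genS, gg1, gg2, Fin.ext_iff, Matrix.cons_val_two]

lemma image_coneGen {V W : Type*} [AddCommGroup V] [Module ℚ V]
    [AddCommGroup W] [Module ℚ W] (f : V →ₗ[ℚ] W) {m : ℕ} (g : Fin m → V) :
    f '' coneGen g = coneGen (⇑f ∘ g) := by
  rw [← subCone_univ, ← subCone_univ, image_subCone]

lemma hS0 : coneSigma = coneGen (G 0) := rfl

lemma hS1 : ⇑eps '' coneSigma = coneGen (G 1) := by
  rw [coneSigma, image_coneGen, eps_genS]; rfl

lemma hS2 : ⇑eps '' (⇑eps '' coneSigma) = coneGen (G 2) := by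
  rw [hS1, image_coneGen]
  show coneGen (⇑eps ∘ gg1) = coneGen gg2
  rw [eps_gg1]

lemma sep01 : coneGen (G 0) ∩ coneGen (G 1) = {0} :=
  coneGen_inter_of_sep (l := lf ![-4, -19, -8])
    (by intro i; fin_cases i <;> norm_num [G, genS, Matrix.cons_val_two])
    (by intro i; fin_cases i <;> norm_num [G, gg1, Matrix.cons_val_two])

lemma sep12 : coneGen (G 1) ∩ coneGen (G 2) = {0} :=
  coneGen_inter_of_sep (l := lf ![3, 0, -1])
    (by intro i; fin_cases i <;> norm_num [G, gg1, Matrix.cons_val_two])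
    (by intro i; fin_cases i <;> norm_num [G, gg2, Matrix.cons_val_two])

lemma sep02 : coneGen (G 0) ∩ coneGen (G 2) = {0} :=
  coneGen_inter_of_sep (l := lf ![3, -3, 1])
    (by intro i; fin_cases i <;> norm_num [G, genS, Matrix.cons_val_two])
    (by intro i; fin_cases i <;> norm_num [G, gg2, Matrix.cons_val_two])

lemma pairG : ∀ k k' : Fin 3, k ≠ k' → coneGen (G k) ∩ coneGen (G k') = ({0} : Set (Fin 3 → ℚ)) := by
  intro k k' h
  fin_cases k <;> fin_cases k' <;>
    first
      | exact absurd rfl h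
      | exact sep01
      | exact sep12
      | exact sep02
      | (rw [Set.inter_comm]; first | exact sep01 | exact sep12 | exact sep02)

lemma face_classify {k : Fin 3} {C : Set (Fin 3 → ℚ)}
    (h : IsFaceOf C (coneGen (G k))) : ∃ I, C = subCone (G k) I := by
  obtain ⟨l, hl, hF⟩ := h
  rw [← subCone_univ] at hF hl
  exact ⟨_, by rw [hF, subCone_inter_ker hl]⟩

lemma classify : ∀ C ∈ fanSigma, ∃ (k : Fin 3) (I : Set (Fin 3)), C = subCone (G k) I := by
  intro C hC
  rcases hC with hC | hC
  · rcases hC with rfl | rfl | rfl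
    · exact ⟨0, Set.univ, by rw [hS0, subCone_univ]⟩
    · exact ⟨1, Set.univ, by rw [hS1, subCone_univ]⟩
    · exact ⟨2, Set.univ, by rw [hS2, subCone_univ]⟩
  · rcases hC with h | h | h
    · rw [hS0] at h; obtain ⟨I, hI⟩ := face_classify h; exact ⟨0, I, hI⟩
    · rw [hS1] at h; obtain ⟨I, hI⟩ := face_classify h; exact ⟨1, I, hI⟩
    · rw [hS2] at h; obtain ⟨I, hI⟩ := face_classify h; exact ⟨2, I, hI⟩

lemma subCone_isFaceOf_coneGen (k : Fin 3) (I : Set (Fin 3)) :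
    IsFaceOf (subCone (G k) I) (coneGen (G k)) := by
  obtain ⟨l, hl, heq⟩ := subCone_isFaceOf_subCone (hD k) (Set.subset_univ I)
  rw [subCone_univ] at hl heq
  exact ⟨l, hl, heq⟩

lemma subCone_mem_fanSigma (k : Fin 3) (I : Set (Fin 3)) :
    subCone (G k) I ∈ fanSigma := by
  have hface := subCone_isFaceOf_coneGen k I
  right
  fin_cases k
  · exact Or.inl (by rw [hS0]; exact hface)
  · exact Or.inr (Or.inl (by rw [hS1]; exact hface))
  · exact Or.inr (Or.inr (by rw [hS2]; exact hface))

lemma eps_G : ∀ k : Fin 3, ∃ k', ⇑eps ∘ G k = G k' := by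
  intro k
  fin_cases k
  · exact ⟨1, eps_genS⟩
  · exact ⟨2, eps_gg1⟩
  · exact ⟨0, eps_gg2⟩

end Concrete

/-- The cones `σ`, `ε(σ)`, `ε²(σ)` pairwise intersect in `{0}`;
consequently `Σ` (these cones and all their faces) is a fan in `ℚ³`, stable
under `ε`. -/
theorem fanSigma_isFan_and_stable :
    (coneSigma ∩ (⇑eps '' coneSigma) = ({0} : Set (Fin 3 → ℚ)) ∧
      (⇑eps '' coneSigma) ∩ (⇑eps '' (⇑eps '' coneSigma)) = ({0} : Set (Fin 3 → ℚ)) ∧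
      coneSigma ∩ (⇑eps '' (⇑eps '' coneSigma)) = ({0} : Set (Fin 3 → ℚ))) ∧
    IsFan fanSigma ∧
    (∀ C ∈ fanSigma, ⇑eps '' C ∈ fanSigma) := by
  refine ⟨⟨?_, ?_, ?_⟩, ⟨?_, ?_, ?_, ?_⟩, ?_⟩
  · rw [hS1, hS0]; exact sep01
  · rw [hS2, hS1]; exact sep12
  · rw [hS2, hS0]; exact sep02
  · -- finiteness
    apply Set.Finite.subset
      (Set.finite_range (fun p : Fin 3 × Set (Fin 3) => subCone (G p.1) p.2))
    intro C hC
    obtain ⟨k, I, rfl⟩ := classify C hC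
    exact ⟨(k, I), rfl⟩
  · -- cones & strict convexity
    intro C hC
    obtain ⟨k, I, rfl⟩ := classify C hC
    exact ⟨subCone_isCone _ _, subCone_neg_inter (hD k) I⟩
  · -- closed under faces
    intro C hC F hF
    obtain ⟨k, I, rfl⟩ := classify C hC
    obtain ⟨l, hl, rfl⟩ := hF
    rw [subCone_inter_ker hl]
    exact subCone_mem_fanSigma k _
  · -- pairwise intersections are faces
    intro C hC C' hC'
    obtain ⟨k, I, rfl⟩ := classify C hC
    obtain ⟨k', J, rfl⟩ := classify C' hC'
    by_cases hkk : k = k'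
    · subst hkk
      rw [subCone_inter_subCone (hD k)]
      exact ⟨subCone_isFaceOf_subCone (hD k) Set.inter_subset_left,
        subCone_isFaceOf_subCone (hD k) Set.inter_subset_right⟩
    · have h0 : subCone (G k) I ∩ subCone (G k') J = ({0} : Set (Fin 3 → ℚ)) := by
        refine Set.Subset.antisymm ?_ ?_
        · intro x hx
          rw [← pairG k k' hkk]
          exact ⟨subCone_subset_coneGen _ _ hx.1, subCone_subset_coneGen _ _ hx.2⟩
        · rintro x rfl
          exact ⟨zero_mem_subCone _ _, zero_mem_subCone _ _⟩
      rw [h0]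
      constructor
      · have h := subCone_isFaceOf_subCone (hD k) (Set.empty_subset I)
        rwa [subCone_empty] at h
      · have h := subCone_isFaceOf_subCone (hD k') (Set.empty_subset J)
        rwa [subCone_empty] at h
  · -- stability under eps
    intro C hC
    obtain ⟨k, I, rfl⟩ := classify C hC
    rw [image_subCone]
    obtain ⟨k', hk'⟩ := eps_G k
    rw [hk']
    exact subCone_mem_fanSigma k' I
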